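/- (Robustness under noisy measurements.) Let A be an m×n real matrix of rank m, let σ > 0 be such that ‖Av‖₂ ≥ σ·‖v‖₂ for every v in the orthogonal complement of the null space of A (i.e. σ is a lower bound on the smallest nonzero singular value of A), let C > 1 and 1 ≤ k ≤ n. Let x ∈ ℝⁿ and y = Ax + b with ‖b‖₂ ≤ ε, and let x̂ minimize ‖z‖₁ over all z ∈ ℝⁿ with Az = y. Suppose that for every w ∈ ℝⁿ with Aw = 0 and every subset K ⊆ {1,…,n} with |K| = k one has C·‖w_K‖₁ ≤ ‖w_K̄‖₁. Then for every subset K with |K| = k, ‖x − x̂‖₁ ≤ (2(C+1)/(C−1))·‖x_K̄‖₁ + ((3C+1)·√n·ε)/((C−1)·σ). -/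

import Mathlib

/-- The ℓ1 norm of a vector in ℝⁿ. -/
noncomputable def l1 {n : ℕ} (x : Fin n → ℝ) : ℝ := ∑ i, |x i|

/-- The Euclidean (ℓ2) norm of a vector in ℝⁿ. -/
noncomputable def l2 {n : ℕ} (x : Fin n → ℝ) : ℝ := Real.sqrt (∑ i, (x i) ^ 2)

/-- The restriction of a vector to the coordinates in `K` (zero outside `K`). -/
def restr {n : ℕ} (K : Finset (Fin n)) (x : Fin n → ℝ) : Fin n → ℝ :=
  fun i => if i ∈ K then x i else 0

lemma l1_nonneg {n : ℕ} (x : Fin n → ℝ) : 0 ≤ l1 x :=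
  Finset.sum_nonneg fun _ _ => abs_nonneg _

lemma l1_split {n : ℕ} (K : Finset (Fin n)) (u : Fin n → ℝ) :
    l1 u = l1 (restr K u) + l1 (restr Kᶜ u) := by
  unfold l1 restr
  rw [← Finset.sum_add_distrib]
  apply Finset.sum_congr rfl
  intro i _
  by_cases h : i ∈ K <;> simp [h]

lemma l1_sub_le {n : ℕ} (a c : Fin n → ℝ) : l1 a - l1 c ≤ l1 (a - c) := by
  unfold l1
  rw [sub_le_iff_le_add, ← Finset.sum_add_distrib]
  apply Finset.sum_le_sum
  intro i _
  simpa using abs_sub_abs_le_abs_sub (a i) (c i)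

lemma l1_sub_le' {n : ℕ} (a c : Fin n → ℝ) : l1 c - l1 a ≤ l1 (a - c) := by
  have : l1 (a - c) = l1 (c - a) := by
    unfold l1; apply Finset.sum_congr rfl; intro i _
    simp [abs_sub_comm]
  rw [this]; exact l1_sub_le c a

lemma l1_add_le {n : ℕ} (a c : Fin n → ℝ) : l1 (a + c) ≤ l1 a + l1 c := by
  unfold l1
  rw [← Finset.sum_add_distrib]
  exact Finset.sum_le_sum fun i _ => by simpa using abs_add_le (a i) (c i)

lemma restr_sub {n : ℕ} (K : Finset (Fin n)) (a c : Fin n → ℝ) :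
    restr K (a - c) = restr K a - restr K c := by
  funext i; by_cases h : i ∈ K <;> simp [restr, h]

lemma l1_restr_le {n : ℕ} (K : Finset (Fin n)) (a : Fin n → ℝ) :
    l1 (restr K a) ≤ l1 a := by
  unfold l1 restr
  apply Finset.sum_le_sum
  intro i _
  by_cases h : i ∈ K <;> simp [h, abs_nonneg]

lemma l1_le_sqrt_mul_l2 {n : ℕ} (v : Fin n → ℝ) : l1 v ≤ Real.sqrt n * l2 v := by
  have h := sq_sum_le_card_mul_sum_sq (s := (Finset.univ : Finset (Fin n)))
    (f := fun i => |v i|)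
  simp only [Finset.card_univ, Fintype.card_fin, sq_abs] at h
  have h1 : l1 v = Real.sqrt ((l1 v) ^ 2) := (Real.sqrt_sq (l1_nonneg v)).symm
  rw [h1]
  unfold l2
  rw [← Real.sqrt_mul (by positivity)]
  apply Real.sqrt_le_sqrt
  exact_mod_cast h


lemma decomp_null {m n : ℕ} (A : Matrix (Fin m) (Fin n) ℝ) (h : Fin n → ℝ) :
    ∃ w v : Fin n → ℝ, h = w + v ∧ A.mulVec w = 0 ∧
      ∀ u : Fin n → ℝ, A.mulVec u = 0 → ∑ i, v i * u i = 0 := by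
  set N : Submodule ℝ (EuclideanSpace ℝ (Fin n)) :=
    (LinearMap.ker A.mulVecLin).comap
      (WithLp.linearEquiv 2 ℝ (Fin n → ℝ) : EuclideanSpace ℝ (Fin n) →ₗ[ℝ] (Fin n → ℝ)) with hNdef
  have hNmem : ∀ u : EuclideanSpace ℝ (Fin n),
      u ∈ N ↔ A.mulVec ((WithLp.equiv 2 (Fin n → ℝ)) u) = 0 := by
    intro u
    simp [hNdef, Submodule.mem_comap, LinearMap.mem_ker, Matrix.mulVecLin_apply]
  set h0 : EuclideanSpace ℝ (Fin n) := (WithLp.equiv 2 (Fin n → ℝ)).symm h with hh0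
  set wE : N := N.orthogonalProjectionOnto h0 with hwE
  refine ⟨(WithLp.equiv 2 (Fin n → ℝ)) (wE : EuclideanSpace ℝ (Fin n)),
    h - (WithLp.equiv 2 (Fin n → ℝ)) (wE : EuclideanSpace ℝ (Fin n)), by abel, (hNmem _).1 wE.2, ?_⟩
  intro u hu
  have hmem : h0 - (wE : EuclideanSpace ℝ (Fin n)) ∈ Nᗮ :=
    Submodule.sub_starProjection_mem_orthogonal (K := N) h0
  have hu' : (WithLp.equiv 2 (Fin n → ℝ)).symm u ∈ N := by
    rw [hNmem]; simpa using hu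
  have hinner := (Submodule.mem_orthogonal N _).1 hmem _ hu'
  rw [PiLp.inner_apply] at hinner
  simp only [RCLike.inner_apply, starRingEnd_apply, star_trivial] at hinner
  rw [← hinner]
  apply Finset.sum_congr rfl
  intro i _
  simp only [hh0, Pi.sub_apply, PiLp.sub_apply, WithLp.equiv_apply,
    WithLp.equiv_symm_apply, WithLp.ofLp_toLp]

set_option maxHeartbeats 1000000 in
theorem stmt_9 {m n : ℕ} (A : Matrix (Fin m) (Fin n) ℝ)
    (hrank : A.rank = m)
    (σ : ℝ) (hσ : 0 < σ)
    -- σ is a lower bound on the smallest nonzero singular value of A: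
    -- ‖Av‖₂ ≥ σ‖v‖₂ for every v orthogonal to the null space of A
    (hsv : ∀ v : Fin n → ℝ,
      (∀ w : Fin n → ℝ, A.mulVec w = 0 → ∑ i, v i * w i = 0) →
      σ * l2 v ≤ l2 (A.mulVec v))
    (C : ℝ) (hC : 1 < C) (k : ℕ) (hk1 : 1 ≤ k) (hkn : k ≤ n)
    (x : Fin n → ℝ) (b : Fin m → ℝ) (ε : ℝ) (hb : l2 b ≤ ε)
    (y : Fin m → ℝ) (hy : y = A.mulVec x + b)
    (xh : Fin n → ℝ) (hfeas : A.mulVec xh = y)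
    (hmin : ∀ z : Fin n → ℝ, A.mulVec z = y → l1 xh ≤ l1 z)
    (hnull : ∀ w : Fin n → ℝ, A.mulVec w = 0 →
      ∀ K : Finset (Fin n), K.card = k →
        C * l1 (restr K w) ≤ l1 (restr Kᶜ w)) :
    ∀ K : Finset (Fin n), K.card = k →
      l1 (x - xh) ≤ (2 * (C + 1) / (C - 1)) * l1 (restr Kᶜ x) +
        ((3 * C + 1) * Real.sqrt n * ε) / ((C - 1) * σ) := by
  intro K hK
  obtain ⟨w, v, hwv, hAw, hvo⟩ := decomp_null A (x - xh)
  have hv : v = (x - xh) - w := by rw [hwv]; abel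
  have hAv : A.mulVec v = -b := by
    rw [hv, Matrix.mulVec_sub, Matrix.mulVec_sub, hAw, hfeas, hy]
    abel
  have hl2neg : l2 (A.mulVec v) = l2 b := by
    rw [hAv]; unfold l2; congr 1
    exact Finset.sum_congr rfl fun i _ => by simp
  have hσv : σ * l2 v ≤ ε := by
    have := hsv v hvo
    rw [hl2neg] at this
    linarith
  have hε : 0 ≤ ε := le_trans (Real.sqrt_nonneg _) hb
  have hl1v : σ * l1 v ≤ Real.sqrt n * ε := by
    have h1 := l1_le_sqrt_mul_l2 v
    have hs : (0:ℝ) ≤ Real.sqrt n := Real.sqrt_nonneg _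
    nlinarith [Real.sqrt_nonneg (∑ i, (v i)^2)]
  -- feasible point z = xh + w = x - v
  set z : Fin n → ℝ := xh + w with hz
  have hzx : z = x - v := by rw [hz, hv]; abel
  have hminz : l1 xh ≤ l1 z := by
    apply hmin
    rw [hz, Matrix.mulVec_add, hfeas, hAw, add_zero]
  have hxhzw : xh = z - w := by funext i; simp [hz]
  -- abbreviations
  set Wk := l1 (restr K w) with hWk
  set Wc := l1 (restr Kᶜ w) with hWc
  set Zk := l1 (restr K z) with hZk
  set Zc := l1 (restr Kᶜ z) with hZc
  set Xc := l1 (restr Kᶜ x) with hXc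
  set V := l1 v with hV
  have key1 : Wc ≤ Wk + 2 * Zc := by
    have e1 : l1 z = Zk + Zc := l1_split K z
    have e2 : l1 (z - w) = l1 (restr K (z - w)) + l1 (restr Kᶜ (z - w)) := l1_split K _
    have i1 : Zk - Wk ≤ l1 (restr K (z - w)) := by
      rw [restr_sub]; exact l1_sub_le _ _
    have i2 : Wc - Zc ≤ l1 (restr Kᶜ (z - w)) := by
      rw [restr_sub]; exact l1_sub_le' _ _
    have : l1 xh = l1 (z - w) := by rw [hxhzw]
    linarith
  have key2 : C * Wk ≤ Wc := hnull w hAw K hK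
  have key3 : Zc ≤ Xc + V := by
    have : restr Kᶜ z = restr Kᶜ x - restr Kᶜ v := by rw [hzx, restr_sub]
    calc Zc = l1 (restr Kᶜ x - restr Kᶜ v) := by rw [hZc, this]
      _ ≤ l1 (restr Kᶜ x) + l1 (restr Kᶜ v) := by
          have := l1_add_le (restr Kᶜ x) (-(restr Kᶜ v))
          have hneg : l1 (-(restr Kᶜ v)) = l1 (restr Kᶜ v) := by
            unfold l1; exact Finset.sum_congr rfl fun i _ => by simp
          calc l1 (restr Kᶜ x - restr Kᶜ v) = l1 (restr Kᶜ x + -(restr Kᶜ v)) := by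
                rw [sub_eq_add_neg]
            _ ≤ _ := by rw [← hneg] at *; linarith [l1_add_le (restr Kᶜ x) (-(restr Kᶜ v))]
      _ ≤ Xc + V := by
          have := l1_restr_le Kᶜ v
          linarith
  have key4 : l1 (x - xh) ≤ (Wk + Wc) + V := by
    have hsplit : l1 w = Wk + Wc := l1_split K w
    rw [hwv]
    calc l1 (w + v) ≤ l1 w + l1 v := l1_add_le w v
      _ = (Wk + Wc) + V := by rw [hsplit]
  -- nonnegativity
  have nWk : 0 ≤ Wk := l1_nonneg _
  have nWc : 0 ≤ Wc := l1_nonneg _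
  have nZc : 0 ≤ Zc := l1_nonneg _
  have nXc : 0 ≤ Xc := l1_nonneg _
  have nV : 0 ≤ V := l1_nonneg _
  have hC0 : (0:ℝ) < C := lt_trans one_pos hC
  have hC1 : (0:ℝ) < C - 1 := by linarith
  -- algebra
  have s1 : (C - 1) * Wc ≤ 2 * C * Zc := by
    nlinarith [mul_le_mul_of_nonneg_left key1 hC0.le]
  have s3 : (C - 1) * (Wk + Wc) ≤ 2 * (C + 1) * Zc := by
    have s2 : C * ((C - 1) * (Wk + Wc)) ≤ C * (2 * (C + 1) * Zc) := by
      nlinarith [mul_le_mul_of_nonneg_left key2 hC1.le,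
        mul_le_mul_of_nonneg_left s1 (by linarith : (0:ℝ) ≤ C + 1)]
    exact le_of_mul_le_mul_left s2 hC0
  have s4 : (C - 1) * l1 (x - xh) ≤ 2 * (C + 1) * Xc + (3 * C + 1) * V := by
    nlinarith [mul_le_mul_of_nonneg_left key3 (by linarith : (0:ℝ) ≤ 2 * (C + 1)),
      mul_le_mul_of_nonneg_left key4 hC1.le]
  have hden : (0:ℝ) < (C - 1) * σ := mul_pos hC1 hσ
  have key : (C - 1) * σ * l1 (x - xh) ≤ 2 * (C + 1) * σ * Xc + (3 * C + 1) * (Real.sqrt n * ε) := by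
    have p1 := mul_le_mul_of_nonneg_left s4 hσ.le
    have p2 := mul_le_mul_of_nonneg_left hl1v (by linarith : (0:ℝ) ≤ 3 * C + 1)
    linarith [p1, p2]
  have heq : 2 * (C + 1) / (C - 1) * Xc + (3 * C + 1) * Real.sqrt n * ε / ((C - 1) * σ)
      = (2 * (C + 1) * σ * Xc + (3 * C + 1) * (Real.sqrt n * ε)) / ((C - 1) * σ) := by
    field_simp
  rw [heq, le_div_iff₀ hden]
  linarith [key]
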